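/- Let m, n, ℓ, r be positive integers and s a nonnegative integer. Suppose that m > ℓ, mn > r, and 4·((m−ℓ)·r − m·s) > ℓ·m². Suppose moreover that for every integer k and every positive integer n' with n' = n − ℓ·k², one has { T' ∈ ℤ : T' ≡ n' (mod 2) and T'² < (m−ℓ)·n' − s } ⊆ 𝒮_{m−ℓ}(n'). Then { T ∈ ℤ : T ≡ n (mod 2) and T² ≤ mn − r } ⊆ 𝒮_m(n). -/
import Mathlib


/-- `S m n` is the set of integers `T` such that there exist integers
`x₁,…,x_m` with `x₁+⋯+x_m = T` and `x₁²+⋯+x_m² = n`. -/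
def S (m n : ℕ) : Set ℤ :=
  {T : ℤ | ∃ x : Fin m → ℤ, (∑ i, x i) = T ∧ (∑ i, (x i) ^ 2) = (n : ℤ)}

/-- `sos m` is the set of integers expressible as a sum of `m` squares of integers. -/
def sos (m : ℕ) : Set ℤ :=
  {n : ℤ | ∃ a : Fin m → ℤ, (∑ i, (a i) ^ 2) = n}

/-- The binary quadratic form `aX² + 2hXY + bY²` is a sum of `m` squares of
integral linear forms. -/
def IsSumSqLin (m : ℕ) (a h b : ℤ) : Prop :=
  ∃ α β : Fin m → ℤ,
    (∑ i, (α i) ^ 2) = a ∧ (∑ i, α i * β i) = h ∧ (∑ i, (β i) ^ 2) = b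

/-- `S m n` is full: every `T` with `T ≡ n (mod 2)` and `T² < mn` lies in `S m n`. -/
def Sfull (m n : ℕ) : Prop :=
  ∀ T : ℤ, T % 2 = (n : ℤ) % 2 → T ^ 2 < (m : ℤ) * n → T ∈ S m n

theorem stmt14 (m n ℓ r : ℕ) (s : ℕ)
    (hm : 0 < m) (hn : 0 < n) (hℓ : 0 < ℓ) (hr : 0 < r)
    (h1 : ℓ < m) (h2 : (r : ℤ) < (m : ℤ) * n)
    (h3 : (ℓ : ℤ) * (m : ℤ) ^ 2 < 4 * (((m : ℤ) - (ℓ : ℤ)) * r - (m : ℤ) * s))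
    (h4 : ∀ k : ℤ, ∀ n' : ℕ, 0 < n' → (n' : ℤ) = (n : ℤ) - (ℓ : ℤ) * k ^ 2 →
      ∀ T' : ℤ, T' % 2 = (n' : ℤ) % 2 →
        T' ^ 2 < ((m : ℤ) - (ℓ : ℤ)) * (n' : ℤ) - (s : ℤ) → T' ∈ S (m - ℓ) n') :
    ∀ T : ℤ, T % 2 = (n : ℤ) % 2 → T ^ 2 ≤ (m : ℤ) * n - (r : ℤ) → T ∈ S m n := by
  intro T hpar hsq
  have hmZ : (0:ℤ) < m := by exact_mod_cast hm
  have hℓZ : (0:ℤ) < ℓ := by exact_mod_cast hℓ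
  have h1Z : (ℓ:ℤ) < m := by exact_mod_cast h1
  obtain ⟨k, hk⟩ : ∃ k : ℤ, 4*((m:ℤ)*k - T)^2 ≤ (m:ℤ)^2 := by
    refine ⟨(2*T + m) / (2*m), ?_⟩
    have h2m : (0:ℤ) < 2*m := by linarith
    have hdm := Int.mul_ediv_add_emod (2*T + m) (2*m)
    have hr0 := Int.emod_nonneg (2*T + m) (by positivity : (2*(m:ℤ)) ≠ 0)
    have hr1 := Int.emod_lt_of_pos (2*T + m) h2m
    nlinarith [hdm, hr0, hr1]
  have hA : 4*((m:ℤ)-ℓ)*(r:ℤ) ≤ 4*((m:ℤ)-ℓ)*((m:ℤ)*n - T^2) :=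
    mul_le_mul_of_nonneg_left (by linarith) (by linarith)
  have hB : (ℓ:ℤ) * (4*((m:ℤ)*k - T)^2) ≤ ℓ * (m:ℤ)^2 :=
    mul_le_mul_of_nonneg_left hk (le_of_lt hℓZ)
  have kid : 4*(m:ℤ)*(((m:ℤ)-ℓ)*((n:ℤ) - ℓ*k^2) - s - (T - ℓ*k)^2)
      = 4*((m:ℤ)-ℓ)*((m:ℤ)*n - T^2) - 4*(m:ℤ)*s - (ℓ:ℤ)*(4*((m:ℤ)*k - T)^2) := by
    ring
  have key : 0 < 4*(m:ℤ)*(((m:ℤ)-ℓ)*((n:ℤ) - ℓ*k^2) - s - (T - ℓ*k)^2) := by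
    rw [kid]; linarith
  have hineq : (T - (ℓ:ℤ)*k)^2 < ((m:ℤ)-ℓ)*((n:ℤ) - ℓ*k^2) - s := by
    rcases mul_pos_iff.mp key with ⟨-, h⟩ | ⟨h, -⟩
    · linarith
    · linarith
  have hsnn : (0:ℤ) ≤ s := Int.natCast_nonneg s
  have hplus : 0 < ((m:ℤ)-ℓ) * ((n:ℤ) - ℓ*k^2) := by
    nlinarith [sq_nonneg (T - (ℓ:ℤ)*k)]
  have hn' : 0 < (n:ℤ) - (ℓ:ℤ)*k^2 := by
    rcases mul_pos_iff.mp hplus with ⟨-, h⟩ | ⟨h, -⟩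
    · exact h
    · linarith
  set N' : ℕ := ((n:ℤ) - (ℓ:ℤ)*k^2).toNat with hN'
  have hN'cast : (N' : ℤ) = (n:ℤ) - (ℓ:ℤ)*k^2 := Int.toNat_of_nonneg hn'.le
  have hN'pos : 0 < N' := by omega
  have hparity : (T - (ℓ:ℤ)*k) % 2 = (N' : ℤ) % 2 := by
    obtain ⟨c, hc⟩ : ∃ c : ℤ, k^2 = k + 2*c := by
      rcases Int.even_or_odd k with ⟨t, ht⟩ | ⟨t, ht⟩
      · exact ⟨2*t^2 - t, by subst ht; ring⟩
      · exact ⟨2*t^2 + t, by subst ht; ring⟩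
    have hkey : (ℓ:ℤ)*k^2 = (ℓ:ℤ)*k + 2*((ℓ:ℤ)*c) := by rw [hc]; ring
    omega
  have hineq' : (T - (ℓ:ℤ)*k)^2 < ((m:ℤ)-ℓ)*(N':ℤ) - s := by
    rw [hN'cast]; exact hineq
  obtain ⟨x', hx1, hx2⟩ := h4 k N' hN'pos hN'cast (T - (ℓ:ℤ)*k) hparity hineq'
  have hml : ℓ + (m - ℓ) = m := by omega
  refine ⟨fun i => Fin.append (fun _ : Fin ℓ => k) x' (Fin.cast hml.symm i), ?_, ?_⟩
  · have := Fintype.sum_equiv (finCongr hml.symm)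
      (fun i : Fin m => Fin.append (fun _ : Fin ℓ => k) x' (Fin.cast hml.symm i))
      (fun j : Fin (ℓ + (m - ℓ)) => Fin.append (fun _ : Fin ℓ => k) x' j)
      (fun i => rfl)
    rw [this, Fin.sum_univ_add]
    simp only [Fin.append_left, Fin.append_right, Finset.sum_const, Finset.card_univ,
      Fintype.card_fin, nsmul_eq_mul]
    rw [hx1]; ring
  · have := Fintype.sum_equiv (finCongr hml.symm)
      (fun i : Fin m => (Fin.append (fun _ : Fin ℓ => k) x' (Fin.cast hml.symm i))^2)
      (fun j : Fin (ℓ + (m - ℓ)) => (Fin.append (fun _ : Fin ℓ => k) x' j)^2)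
      (fun i => rfl)
    rw [this, Fin.sum_univ_add]
    simp only [Fin.append_left, Fin.append_right, Finset.sum_const, Finset.card_univ,
      Fintype.card_fin, nsmul_eq_mul]
    rw [hx2, hN'cast]; ring
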